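/- arXiv:1704.06341 — 3 statements merged into one kernel-verified Lean document; each statement's English description precedes it below -/
import Mathlib

section
/- Let F : ℝ × ℝᵏ × ℝ → ℝⁿ satisfy: (a) ‖F(t,u₁,ε) - F(t,u₂,ε)‖ ≤ L‖u₁ - u₂‖ for all t, u₁, u₂ and all ε, with L independent of ε; (b) ‖F(t,u,ε)‖ ≤ B for all t ∈ [τ,T], u in a fixed bounded set, and all ε; (c) for every fixed u ∈ ℝᵏ and every t ∈ [τ,T], ∫_τ^t F(s,u,ε) ds → ∫_τ^t F(s,u,ε₀) ds as ε → ε₀; (d) s ↦ F(s,u,ε₀) is continuous for each u. Let u_ε : [τ,T] → ℝᵏ be continuous with values in the fixed bounded set, converging uniformly on [τ,T] to u₀ as ε → ε₀. Then ∫_τ^t F(s,u_ε(s),ε) ds → ∫_τ^t F(s,u₀(s),ε₀) ds as ε → ε₀, for all t ∈ [τ,T]. -/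
set_option maxHeartbeats 1000000


open Filter MeasureTheory intervalIntegral Set
open scoped Interval

/-- Krasnoselskii–Krein theorem on passage to the limit in integrals. -/
theorem stmt13 (n k : ℕ) (τ T L B ε₀ : ℝ) (hτT : τ ≤ T) (hL : 0 ≤ L)
    (F : ℝ → EuclideanSpace ℝ (Fin k) → ℝ → EuclideanSpace ℝ (Fin n))
    (K : Set (EuclideanSpace ℝ (Fin k))) (hK : Bornology.IsBounded K)
    (hLip : ∀ (t : ℝ) (u₁ u₂ : EuclideanSpace ℝ (Fin k)) (ε : ℝ),
      ‖F t u₁ ε - F t u₂ ε‖ ≤ L * ‖u₁ - u₂‖)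
    (hB : ∀ t ∈ Icc τ T, ∀ u ∈ K, ∀ ε : ℝ, ‖F t u ε‖ ≤ B)
    (hmeas : ∀ (ε : ℝ) (u : EuclideanSpace ℝ (Fin k)),
      AEStronglyMeasurable (fun s => F s u ε) (volume.restrict (Icc τ T)))
    (hic : ∀ (u : EuclideanSpace ℝ (Fin k)), ∀ t ∈ Icc τ T,
      Tendsto (fun ε : ℝ => ∫ s in τ..t, F s u ε) (nhds ε₀)
        (nhds (∫ s in τ..t, F s u ε₀)))
    (hcont0 : ∀ u : EuclideanSpace ℝ (Fin k), Continuous fun s => F s u ε₀)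
    (u : ℝ → ℝ → EuclideanSpace ℝ (Fin k)) (u₀ : ℝ → EuclideanSpace ℝ (Fin k))
    (hucont : ∀ ε, ContinuousOn (u ε) (Icc τ T))
    (huK : ∀ ε, ∀ t ∈ Icc τ T, u ε t ∈ K)
    (hu₀K : ∀ t ∈ Icc τ T, u₀ t ∈ K)
    (huconv : TendstoUniformlyOn u u₀ (nhds ε₀) (Icc τ T)) :
    ∀ t ∈ Icc τ T,
      Tendsto (fun ε : ℝ => ∫ s in τ..t, F s (u ε s) ε) (nhds ε₀)
        (nhds (∫ s in τ..t, F s (u₀ s) ε₀)) := by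
  -- the clamp function onto [τ, T]
  set c : ℝ → ℝ := fun x => max τ (min x T) with hc
  have hcmem : ∀ x, c x ∈ Icc τ T := fun x =>
    ⟨le_max_left _ _, max_le hτT (min_le_right _ _)⟩
  have hceq : ∀ x ∈ Icc τ T, c x = x := fun x hx => by
    simp only [hc]; rw [min_eq_left hx.2, max_eq_right hx.1]
  have hccont : Continuous c := continuous_const.max (continuous_id.min continuous_const)
  -- extended state functions
  set v : ℝ → ℝ → EuclideanSpace ℝ (Fin k) := fun ε x => u ε (c x) with hv
  set v₀ : ℝ → EuclideanSpace ℝ (Fin k) := fun x => u₀ (c x) with hv₀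
  have hu₀cont : ContinuousOn u₀ (Icc τ T) :=
    huconv.continuousOn (.of_forall hucont)
  have hvcont : ∀ ε, Continuous (v ε) := fun ε =>
    (hucont ε).comp_continuous hccont hcmem
  have hv₀cont : Continuous v₀ := hu₀cont.comp_continuous hccont hcmem
  have hvsm : ∀ ε, StronglyMeasurable (v ε) := fun ε => (hvcont ε).stronglyMeasurable
  have hv₀sm : StronglyMeasurable v₀ := hv₀cont.stronglyMeasurable
  have hvK : ∀ ε, ∀ s ∈ Icc τ T, v ε s ∈ K := fun ε s _ => huK ε _ (hcmem s)
  have hv₀K : ∀ s ∈ Icc τ T, v₀ s ∈ K := fun s _ => hu₀K _ (hcmem s)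
  have hveq : ∀ ε, ∀ s ∈ Icc τ T, v ε s = u ε s := fun ε s hs => by
    simp only [hv]; rw [hceq s hs]
  have hv₀eq : ∀ s ∈ Icc τ T, v₀ s = u₀ s := fun s hs => by
    simp only [hv₀]; rw [hceq s hs]
  -- Lipschitz continuity of F in the state
  have hFcont : ∀ (s ε : ℝ), Continuous fun x => F s x ε := by
    intro s ε
    refine (LipschitzWith.of_dist_le_mul (K := L.toNNReal) fun x y => ?_).continuous
    rw [dist_eq_norm, dist_eq_norm, Real.coe_toNNReal L hL]
    exact hLip s x y ε
  -- measurability of compositions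
  have measAux : ∀ (ε : ℝ) (w : ℝ → EuclideanSpace ℝ (Fin k)), StronglyMeasurable w →
      AEStronglyMeasurable (fun s => F s (w s) ε) (volume.restrict (Icc τ T)) := by
    intro ε w hw
    have hsimple : ∀ m : ℕ, AEStronglyMeasurable (fun s => F s (hw.approx m s) ε)
        (volume.restrict (Icc τ T)) := by
      intro m
      have heq : (fun s => F s (hw.approx m s) ε) = fun s =>
          ∑ x ∈ (hw.approx m).range, Set.indicator ((hw.approx m) ⁻¹' {x})
            (fun s' => F s' x ε) s := by
        funext s
        rw [Finset.sum_eq_single_of_mem (hw.approx m s)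
          (SimpleFunc.mem_range_self _ s)]
        · rw [Set.indicator_of_mem]
          simp [Set.mem_preimage]
        · intro x _ hne
          apply Set.indicator_of_notMem
          simp only [Set.mem_preimage, Set.mem_singleton_iff]
          exact fun h => hne h.symm
      rw [heq]
      exact Finset.aestronglyMeasurable_fun_sum _ fun x _ =>
        (hmeas ε x).indicator ((hw.approx m).measurableSet_fiber x)
    refine aestronglyMeasurable_of_tendsto_ae atTop hsimple (.of_forall fun s => ?_)
    exact ((hFcont s ε).tendsto _).comp (hw.tendsto_approx s)
  -- integrability of compositions
  have intAux : ∀ (ε : ℝ) (w : ℝ → EuclideanSpace ℝ (Fin k)), StronglyMeasurable w →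
      (∀ s ∈ Icc τ T, w s ∈ K) → ∀ a ∈ Icc τ T, ∀ b ∈ Icc τ T,
      IntervalIntegrable (fun s => F s (w s) ε) volume a b := by
    intro ε w hw hwK a ha b hb
    rw [intervalIntegrable_iff]
    have hsub : Ι a b ⊆ Icc τ T := by
      refine Set.Ioc_subset_Icc_self.trans (Set.Icc_subset_Icc ?_ ?_)
      · exact le_min ha.1 hb.1
      · exact max_le ha.2 hb.2
    constructor
    · exact (measAux ε w hw).mono_measure (Measure.restrict_mono hsub le_rfl)
    · haveI : IsFiniteMeasure (volume.restrict (Ι a b)) := by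
        constructor
        rw [Measure.restrict_apply_univ]
        exact measure_Ioc_lt_top
      exact HasFiniteIntegral.of_bounded (C := B)
        (ae_restrict_of_forall_mem measurableSet_uIoc fun s hs =>
          hB s (hsub hs) _ (hwK s (hsub hs)) ε)
  -- the key norm estimate
  have estim : ∀ (ε : ℝ) (w₁ w₂ : ℝ → EuclideanSpace ℝ (Fin k)) (a b : ℝ),
      a ∈ Icc τ T → b ∈ Icc τ T → StronglyMeasurable w₁ → StronglyMeasurable w₂ →
      (∀ s ∈ Icc τ T, w₁ s ∈ K) → (∀ s ∈ Icc τ T, w₂ s ∈ K) →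
      ∀ C : ℝ, (∀ s ∈ Ι a b, ‖w₁ s - w₂ s‖ ≤ C) →
      ‖(∫ s in a..b, F s (w₁ s) ε) - ∫ s in a..b, F s (w₂ s) ε‖ ≤ L * C * |b - a| := by
    intro ε w₁ w₂ a b ha hb hw₁ hw₂ hK₁ hK₂ C hC
    rw [← intervalIntegral.integral_sub (intAux ε w₁ hw₁ hK₁ a ha b hb)
      (intAux ε w₂ hw₂ hK₂ a ha b hb)]
    refine intervalIntegral.norm_integral_le_of_norm_le_const fun s hs => ?_
    exact (hLip s _ _ ε).trans (mul_le_mul_of_nonneg_left (hC s hs) hL)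
  -- main argument
  intro t ht
  have hτt : τ ≤ t := ht.1
  have hτmem : τ ∈ Icc τ T := ⟨le_rfl, hτT⟩
  have htmem : t ∈ Icc τ T := ht
  -- replace u by v in the goal
  have hgoal1 : ∀ ε, (∫ s in τ..t, F s (u ε s) ε) = ∫ s in τ..t, F s (v ε s) ε := by
    intro ε
    refine intervalIntegral.integral_congr fun s hs => ?_
    rw [Set.uIcc_of_le hτt] at hs
    rw [hveq ε s (Set.Icc_subset_Icc le_rfl ht.2 hs)]
  have hgoal2 : (∫ s in τ..t, F s (u₀ s) ε₀) = ∫ s in τ..t, F s (v₀ s) ε₀ := by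
    refine intervalIntegral.integral_congr fun s hs => ?_
    rw [Set.uIcc_of_le hτt] at hs
    rw [hv₀eq s (Set.Icc_subset_Icc le_rfl ht.2 hs)]
  simp only [hgoal1, hgoal2]
  rw [Metric.tendsto_nhds]
  intro δ hδ
  -- choose η
  have hLT : (0:ℝ) ≤ L * (T - τ) := mul_nonneg hL (by linarith)
  set η : ℝ := δ / (4 * (L * (T - τ) + 1)) with hηdef
  have hden : (0:ℝ) < 4 * (L * (T - τ) + 1) := by linarith
  have hη : 0 < η := div_pos hδ hden
  have hηden : η * (4 * (L * (T - τ) + 1)) = δ := div_mul_cancel₀ δ (ne_of_gt hden)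
  have hLη : L * (T - τ) * η < δ / 4 := by nlinarith
  -- uniform continuity of u₀
  obtain ⟨d, hd, hdprop⟩ := Metric.uniformContinuousOn_iff.mp
    (isCompact_Icc.uniformContinuousOn_of_continuous hu₀cont) η hη
  -- partition
  obtain ⟨N, hN⟩ := exists_nat_gt ((t - τ) / d)
  have hN0 : (0:ℝ) < N := lt_of_le_of_lt (div_nonneg (by linarith) hd.le) hN
  set mesh : ℝ := (t - τ) / N with hmeshdef
  have hmesh0 : 0 ≤ mesh := div_nonneg (by linarith) hN0.le
  have hmeshd : mesh < d := by
    rw [hmeshdef, div_lt_iff₀ hN0]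
    have := (div_lt_iff₀ hd).mp hN
    linarith
  have hNmesh : (N:ℝ) * mesh = t - τ := mul_div_cancel₀ _ hN0.ne'
  set p : ℕ → ℝ := fun i => τ + i * mesh with hp
  have hp0 : p 0 = τ := by simp [hp]
  have hpN : p N = t := by simp only [hp]; rw [hNmesh]; ring
  have hpstep : ∀ i : ℕ, p (i+1) - p i = mesh := by
    intro i; simp only [hp]; push_cast; ring
  have hpmem : ∀ i ≤ N, p i ∈ Icc τ T := by
    intro i hi
    have hiN : (i:ℝ) ≤ N := Nat.cast_le.mpr hi
    have h1 : (0:ℝ) ≤ (i:ℝ) * mesh := mul_nonneg (Nat.cast_nonneg i) hmesh0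
    have h2 : (i:ℝ) * mesh ≤ (N:ℝ) * mesh := mul_le_mul_of_nonneg_right hiN hmesh0
    constructor
    · simp only [hp]; linarith
    · simp only [hp]; have := ht.2; linarith [hNmesh ▸ h2]
  have hpIoc : ∀ i, i + 1 ≤ N → Ι (p i) (p (i+1)) ⊆ Icc τ T := by
    intro i hi
    rw [Set.uIoc_of_le (by linarith [hpstep i, hmesh0] : p i ≤ p (i+1))]
    intro s hs
    exact ⟨le_trans (hpmem i (by omega)).1 hs.1.le, le_trans hs.2 (hpmem (i+1) hi).2⟩
  -- the step-function sum
  set G : ℝ → EuclideanSpace ℝ (Fin n) := fun ε =>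
    ∑ i ∈ Finset.range N, ∫ s in p i..p (i+1), F s (v₀ (p i)) ε with hG
  have hGconst : ∀ i, i + 1 ≤ N → ∀ s ∈ Icc τ T,
      (fun _ : ℝ => v₀ (p i)) s ∈ K := by
    intro i hi s _
    exact hv₀K (p i) (hpmem i (by omega))
  have hGt : Tendsto G (nhds ε₀) (nhds (G ε₀)) := by
    refine tendsto_finset_sum _ fun i hi => ?_
    have hi' : i + 1 ≤ N := Finset.mem_range.mp hi
    have h1 := hpmem i (by omega)
    have h2 := hpmem (i+1) hi'
    have heq : ∀ ε : ℝ, (∫ s in p i..p (i+1), F s (v₀ (p i)) ε) =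
        (∫ s in τ..p (i+1), F s (v₀ (p i)) ε) - ∫ s in τ..p i, F s (v₀ (p i)) ε := by
      intro ε
      rw [integral_interval_sub_left
        (intAux ε _ stronglyMeasurable_const (hGconst i hi') τ hτmem _ h2)
        (intAux ε _ stronglyMeasurable_const (hGconst i hi') τ hτmem _ h1)]
    simp only [heq]
    exact ((hic _ _ h2).sub (hic _ _ h1))
  -- splitting the integral along the partition
  have hsplit : ∀ (ε : ℝ) (w : ℝ → EuclideanSpace ℝ (Fin k)), StronglyMeasurable w →
      (∀ s ∈ Icc τ T, w s ∈ K) →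
      (∫ s in τ..t, F s (w s) ε) = ∑ i ∈ Finset.range N,
        ∫ s in p i..p (i+1), F s (w s) ε := by
    intro ε w hw hwK
    rw [← hp0, ← hpN]
    exact (intervalIntegral.sum_integral_adjacent_intervals fun i hi =>
      intAux ε w hw hwK _ (hpmem i hi.le) _ (hpmem (i+1) hi)).symm
  -- comparison of ∫ F(s, v₀ s, ε) with G ε, uniformly in ε
  have hcompare : ∀ ε : ℝ, ‖(∫ s in τ..t, F s (v₀ s) ε) - G ε‖ ≤ L * η * (t - τ) := by
    intro ε
    rw [hsplit ε v₀ hv₀sm hv₀K, hG, ← Finset.sum_sub_distrib]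
    refine (norm_sum_le _ _).trans ?_
    have hbound : ∀ i ∈ Finset.range N,
        ‖(∫ s in p i..p (i+1), F s (v₀ s) ε) -
          ∫ s in p i..p (i+1), F s (v₀ (p i)) ε‖ ≤ L * η * mesh := by
      intro i hi
      have hi' : i + 1 ≤ N := Finset.mem_range.mp hi
      have h1 := hpmem i (by omega)
      have h2 := hpmem (i+1) hi'
      have hstep := estim ε v₀ (fun _ => v₀ (p i)) (p i) (p (i+1)) h1 h2 hv₀sm
        stronglyMeasurable_const hv₀K (hGconst i hi') η ?_
      · calc ‖(∫ s in p i..p (i+1), F s (v₀ s) ε) -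
            ∫ s in p i..p (i+1), F s (v₀ (p i)) ε‖
            ≤ L * η * |p (i+1) - p i| := hstep
          _ = L * η * mesh := by rw [hpstep i, abs_of_nonneg hmesh0]
      · intro s hs
        have hsmem : s ∈ Icc τ T := hpIoc i hi' hs
        rw [Set.uIoc_of_le (by linarith [hpstep i, hmesh0] : p i ≤ p (i+1))] at hs
        have hdist : dist s (p i) < d := by
          rw [Real.dist_eq, abs_of_nonneg (by linarith [hs.1.le] : 0 ≤ s - p i)]
          linarith [hs.2, hpstep i]
        have := hdprop s hsmem (p i) h1 hdist
        rw [dist_eq_norm] at this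
        rw [hv₀eq s hsmem, hv₀eq (p i) h1]
        exact this.le
    calc ∑ i ∈ Finset.range N, ‖(∫ s in p i..p (i+1), F s (v₀ s) ε) -
          ∫ s in p i..p (i+1), F s (v₀ (p i)) ε‖
        ≤ ∑ _i ∈ Finset.range N, L * η * mesh := Finset.sum_le_sum hbound
      _ = N * (L * η * mesh) := by rw [Finset.sum_const, Finset.card_range, nsmul_eq_mul]
      _ = L * η * (t - τ) := by rw [← hNmesh]; ring
  -- uniform closeness of u ε to u₀
  have hev1 := Metric.tendstoUniformlyOn_iff.mp huconv η hη
  have hev2 := Metric.tendsto_nhds.mp hGt (δ/4) (by linarith)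
  filter_upwards [hev1, hev2] with ε hε1 hε2
  rw [dist_eq_norm]
  set A : EuclideanSpace ℝ (Fin n) := ∫ s in τ..t, F s (v ε s) ε
  set Bv : EuclideanSpace ℝ (Fin n) := ∫ s in τ..t, F s (v₀ s) ε
  set D : EuclideanSpace ℝ (Fin n) := ∫ s in τ..t, F s (v₀ s) ε₀
  have e1 : ‖A - Bv‖ ≤ L * η * (t - τ) := by
    have := estim ε (v ε) v₀ τ t hτmem htmem (hvsm ε) hv₀sm (hvK ε) hv₀K η ?_
    · calc ‖A - Bv‖ ≤ L * η * |t - τ| := this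
        _ = L * η * (t - τ) := by rw [abs_of_nonneg (by linarith)]
    · intro s hs
      have hsmem : s ∈ Icc τ T := by
        rw [Set.uIoc_of_le hτt] at hs
        exact ⟨hs.1.le, le_trans hs.2 ht.2⟩
      rw [hveq ε s hsmem, hv₀eq s hsmem]
      have := hε1 s hsmem
      rw [dist_eq_norm] at this
      calc ‖u ε s - u₀ s‖ = ‖u₀ s - u ε s‖ := norm_sub_rev _ _
        _ ≤ η := this.le
  have e2 : ‖Bv - G ε‖ ≤ L * η * (t - τ) := hcompare ε
  have e3 : ‖G ε - G ε₀‖ < δ / 4 := by rw [← dist_eq_norm]; exact hε2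
  have e4 : ‖G ε₀ - D‖ ≤ L * η * (t - τ) := by
    calc ‖G ε₀ - D‖ = ‖D - G ε₀‖ := norm_sub_rev _ _
      _ ≤ L * η * (t - τ) := hcompare ε₀
  have tri : ‖A - D‖ ≤ ‖A - Bv‖ + ‖Bv - G ε‖ + ‖G ε - G ε₀‖ + ‖G ε₀ - D‖ := by
    have h : A - D = (A - Bv) + ((Bv - G ε) + ((G ε - G ε₀) + (G ε₀ - D))) := by abel
    rw [h]
    calc ‖(A - Bv) + ((Bv - G ε) + ((G ε - G ε₀) + (G ε₀ - D)))‖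
        ≤ ‖A - Bv‖ + ‖(Bv - G ε) + ((G ε - G ε₀) + (G ε₀ - D))‖ := norm_add_le _ _
      _ ≤ ‖A - Bv‖ + (‖Bv - G ε‖ + ‖(G ε - G ε₀) + (G ε₀ - D)‖) := by
          gcongr; exact norm_add_le _ _
      _ ≤ ‖A - Bv‖ + (‖Bv - G ε‖ + (‖G ε - G ε₀‖ + ‖G ε₀ - D‖)) := by
          gcongr; exact norm_add_le _ _
      _ = ‖A - Bv‖ + ‖Bv - G ε‖ + ‖G ε - G ε₀‖ + ‖G ε₀ - D‖ := by ring
  have hTt : (0:ℝ) ≤ T - t := by linarith [ht.2]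
  have hmul : L * η * (t - τ) ≤ L * (T - τ) * η := by
    have h1 : t - τ ≤ T - τ := by linarith [ht.2]
    have h2 : (0:ℝ) ≤ L * η := mul_nonneg hL hη.le
    calc L * η * (t - τ) ≤ L * η * (T - τ) := mul_le_mul_of_nonneg_left h1 h2
      _ = L * (T - τ) * η := by ring
  linarith
end

section
/- Let g : ℝ × ℝⁿ → ℝⁿ be almost periodic in t (uniformly for x in bounded sets) with uniform mean g₀(x) = lim_{T→∞}(1/T)∫₀ᵀ g(τ,x)dτ, where the limit is uniform in the starting point a of the averaging window. Define f(t,x,ε) = g(t/ε, x) for ε ≠ 0 and f(t,x,0) = g₀(x). Then f is integrally continuous at ε = 0: for all τ, t ∈ ℝ and x ∈ ℝⁿ, lim_{ε→0} ∫_τ^t f(s,x,ε) ds = ∫_τ^t f(s,x,0) ds = (t-τ)·g₀(x). -/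
open Filter intervalIntegral Set

/-- Integral continuity at ε = 0 of the high-frequency family f(t,x,ε) =
g(t/ε, x), f(t,x,0) = g₀(x), for g almost periodic in t with uniform mean. -/
theorem stmt14 (n : ℕ)
    (g : ℝ → EuclideanSpace ℝ (Fin n) → EuclideanSpace ℝ (Fin n))
    (g₀ : EuclideanSpace ℝ (Fin n) → EuclideanSpace ℝ (Fin n))
    (hcont : ∀ x, Continuous fun t => g t x)
    (hap : ∀ x : EuclideanSpace ℝ (Fin n), ∀ ε > (0:ℝ), ∃ p > (0:ℝ), ∀ a : ℝ,
      ∃ s ∈ Icc a (a + p), ∀ u : ℝ, ‖g (u + s) x - g u x‖ < ε)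
    (hmean : ∀ x : EuclideanSpace ℝ (Fin n), ∀ δ > (0:ℝ), ∃ T₀ > (0:ℝ),
      ∀ T ≥ T₀, ∀ a : ℝ, ‖(1 / T) • (∫ σ in a..(a + T), g σ x) - g₀ x‖ < δ)
    (f : ℝ → EuclideanSpace ℝ (Fin n) → ℝ → EuclideanSpace ℝ (Fin n))
    (hf : ∀ t x ε, f t x ε = if ε = 0 then g₀ x else g (t / ε) x) :
    ∀ (τ t : ℝ) (x : EuclideanSpace ℝ (Fin n)),
      Tendsto (fun ε : ℝ => ∫ s in τ..t, f s x ε)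
        (nhdsWithin 0 {(0:ℝ)}ᶜ) (nhds (∫ s in τ..t, f s x 0)) ∧
      (∫ s in τ..t, f s x 0) = (t - τ) • g₀ x := by
  intro τ t x
  have h0 : (∫ s in τ..t, f s x 0) = (t - τ) • g₀ x := by
    simp [hf]
  refine ⟨?_, h0⟩
  rw [h0]
  rcases eq_or_ne t τ with rfl | hne
  · simp only [intervalIntegral.integral_same, sub_self, zero_smul]
    exact tendsto_const_nhds
  have hsub : t - τ ≠ 0 := sub_ne_zero.mpr hne
  have hc : (0:ℝ) < |t - τ| := abs_pos.mpr hsub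
  rw [Metric.tendsto_nhdsWithin_nhds]
  intro δ hδ
  obtain ⟨T₀, hT₀, hT⟩ := hmean x (δ / |t - τ|) (div_pos hδ hc)
  refine ⟨|t - τ| / T₀, div_pos hc hT₀, ?_⟩
  intro ε hεmem hεdist
  have hεne : ε ≠ 0 := hεmem
  have hεabs : (0:ℝ) < |ε| := abs_pos.mpr hεne
  have hεlt : |ε| < |t - τ| / T₀ := by rwa [Real.dist_eq, sub_zero] at hεdist
  have hTbig : T₀ ≤ |t - τ| / |ε| := by
    rw [le_div_iff₀ hεabs]
    have := (lt_div_iff₀ hT₀).mp hεlt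
    nlinarith
  -- rewrite the integral via the substitution s ↦ s/ε
  have hint : (∫ s in τ..t, f s x ε) = ε • ∫ σ in τ / ε..t / ε, g σ x := by
    have hfun : (fun s => f s x ε) = fun s => g (s / ε) x := by
      funext s; simp [hf, hεne]
    rw [show (∫ s in τ..t, f s x ε) = ∫ s in τ..t, g (s / ε) x from by
      simp only [hfun]]
    exact intervalIntegral.integral_comp_div (fun σ => g σ x) hεne
  set T' : ℝ := (t - τ) / ε with hT'
  have hT'ne : T' ≠ 0 := div_ne_zero hsub hεne
  have habsT' : |T'| = |t - τ| / |ε| := abs_div _ _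
  have key : (t - τ) * (1 / T') = ε := by rw [hT']; field_simp
  -- produce a mean M with the right properties
  obtain ⟨M, hM1, hM2⟩ :
      ∃ M, (ε • ∫ σ in τ / ε..t / ε, g σ x) = (t - τ) • M ∧
        ‖M - g₀ x‖ < δ / |t - τ| := by
    rcases hT'ne.lt_or_gt with hneg | hpos
    · refine ⟨(1 / (-T')) • ∫ σ in t / ε..(t / ε + (-T')), g σ x, ?_, ?_⟩
      · have hend : t / ε + (-T') = τ / ε := by
          rw [hT']; field_simp; ring
        rw [hend, intervalIntegral.integral_symm (τ / ε) (t / ε), smul_neg,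
          smul_neg, smul_smul,
          show (t - τ) * (1 / -T') = -ε from by rw [div_neg, mul_neg, key],
          neg_smul, neg_neg]
      · apply hT
        rw [show -T' = |T'| from by rw [abs_of_neg hneg], habsT']
        exact hTbig
    · refine ⟨(1 / T') • ∫ σ in τ / ε..(τ / ε + T'), g σ x, ?_, ?_⟩
      · have hend : τ / ε + T' = t / ε := by
          rw [hT']; field_simp; ring
        rw [hend, smul_smul,
          key]
      · apply hT
        rw [show T' = |T'| from (abs_of_pos hpos).symm, habsT']
        exact hTbig
  rw [hint, hM1, dist_eq_norm, ← smul_sub, norm_smul, Real.norm_eq_abs]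
  calc |t - τ| * ‖M - g₀ x‖ < |t - τ| * (δ / |t - τ|) :=
        mul_lt_mul_of_pos_left hM2 hc
    _ = δ := by field_simp
end

section
/- Let α > 0 and let f : ℝ × ℝⁿ → ℝⁿ satisfy ⟨f(t,x₁) - f(t,x₂), x₁ - x₂⟩ ≥ α‖x₁ - x₂‖². Let C(t) ⊆ ℝⁿ be convex for each t, and let x₁, x₂ : [t₀,∞) → ℝⁿ be absolutely continuous functions with x_i(t) ∈ C(t) such that for almost all t, -x_i'(t) - f(t,x_i(t)) ∈ N_{C(t)}(x_i(t)) for i = 1,2, where N_C(x) = {ξ : ⟨ξ, c - x⟩ ≤ 0 for all c ∈ C}. Then ‖x₁(t) - x₂(t)‖² ≤ e^{-2α(t-t₀)}·‖x₁(t₀) - x₂(t₀)‖² for all t ≥ t₀. -/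
open MeasureTheory intervalIntegral

section Helpers

variable {E : Type*} [NormedAddCommGroup E] [InnerProductSpace ℝ E] [CompleteSpace E]

private lemma setInt_inner_right {s : Set ℝ} {f : ℝ → E} (hf : IntegrableOn f s) (c : E) :
    ∫ t in s, (inner ℝ c (f t) : ℝ) = inner ℝ c (∫ t in s, f t) :=
  integral_inner hf c

private lemma setInt_inner_left {s : Set ℝ} {f : ℝ → E} (hf : IntegrableOn f s) (c : E) :
    ∫ t in s, (inner ℝ (f t) c : ℝ) = inner ℝ (∫ t in s, f t) c := by
  rw [real_inner_comm, ← integral_inner hf c]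
  exact integral_congr_ae (Filter.Eventually.of_forall fun t => real_inner_comm _ _)

private lemma contOn_primitive {a b : ℝ} {v' : ℝ → E} (hv : IntegrableOn v' (Set.Ioc a b)) :
    ContinuousOn (fun t => ∫ r in Set.Ioc a t, v' r) (Set.Icc a b) :=
  intervalIntegral.continuousOn_primitive ((integrableOn_Icc_iff_integrableOn_Ioc (f := v')).2 hv)

/-- Integrability of `t ↦ ⟪u' t, ∫_{(a,t]} v'⟫` on `(a,b]`. -/
private lemma integrableOn_inner_primitive {a b : ℝ} {u' v' : ℝ → E}
    (hu : IntegrableOn u' (Set.Ioc a b)) (hv : IntegrableOn v' (Set.Ioc a b)) :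
    IntegrableOn (fun t => (inner ℝ (u' t) (∫ r in Set.Ioc a t, v' r) : ℝ)) (Set.Ioc a b) := by
  obtain ⟨M, hM⟩ := isCompact_Icc.exists_bound_of_continuousOn (contOn_primitive hv)
  refine Integrable.mono' (hu.norm.mul_const M) ?_ ?_
  · exact AEStronglyMeasurable.inner hu.aestronglyMeasurable
      (((contOn_primitive hv).mono Set.Ioc_subset_Icc_self).aestronglyMeasurable
        measurableSet_Ioc)
  · refine (ae_restrict_iff' measurableSet_Ioc).2 (Filter.Eventually.of_forall fun t ht => ?_)
    calc ‖(inner ℝ (u' t) (∫ r in Set.Ioc a t, v' r) : ℝ)‖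
        ≤ ‖u' t‖ * ‖∫ r in Set.Ioc a t, v' r‖ := norm_inner_le_norm _ _
      _ ≤ ‖u' t‖ * M := by
          exact mul_le_mul_of_nonneg_left (hM t (Set.Ioc_subset_Icc_self ht)) (norm_nonneg _)

private lemma integrableOn_inner_const {a b : ℝ} {u' : ℝ → E} (c : E)
    (hu : IntegrableOn u' (Set.Ioc a b)) :
    IntegrableOn (fun t => (inner ℝ (u' t) c : ℝ)) (Set.Ioc a b) := by
  refine Integrable.mono' (hu.norm.mul_const ‖c‖) ?_ ?_
  · exact AEStronglyMeasurable.inner hu.aestronglyMeasurable aestronglyMeasurable_const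
  · exact Filter.Eventually.of_forall fun t => norm_inner_le_norm _ _

private lemma integrableOn_inner_primitive' {a b : ℝ} {u' v' : ℝ → E}
    (hu : IntegrableOn u' (Set.Ioc a b)) (hv : IntegrableOn v' (Set.Ioc a b)) :
    IntegrableOn (fun t => (inner ℝ (∫ r in Set.Ioc a t, u' r) (v' t) : ℝ)) (Set.Ioc a b) :=
  (integrableOn_inner_primitive hv hu).congr_fun
    (fun t _ => real_inner_comm _ _) measurableSet_Ioc

/-- The key Fubini identity: `⟪∫u', ∫v'⟫ = ∫ (⟪u', V⟫ + ⟪U, v'⟫)`. -/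
private lemma inner_integral_eq {a b : ℝ} (hab : a ≤ b) {u' v' : ℝ → E}
    (hu : IntegrableOn u' (Set.Ioc a b)) (hv : IntegrableOn v' (Set.Ioc a b)) :
    (inner ℝ (∫ t in Set.Ioc a b, u' t) (∫ t in Set.Ioc a b, v' t) : ℝ)
      = ∫ t in Set.Ioc a b, ((inner ℝ (u' t) (∫ r in Set.Ioc a t, v' r) : ℝ)
          + (inner ℝ (∫ r in Set.Ioc a t, u' r) (v' t) : ℝ)) := by
  set μab := volume.restrict (Set.Ioc a b) with hμab
  set U : ℝ → E := fun r => ∫ s in Set.Ioc a r, u' s with hU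
  set V : ℝ → E := fun r => ∫ s in Set.Ioc a r, v' s with hV
  set H : ℝ → ℝ → ℝ := fun t r => if t < r then (inner ℝ (u' t) (v' r) : ℝ) else 0 with hH
  -- integrability of the kernel on the product
  have hK : Integrable (fun p : ℝ × ℝ => (inner ℝ (u' p.1) (v' p.2) : ℝ)) (μab.prod μab) := by
    refine Integrable.mono' (hu.norm.mul_prod hv.norm) ?_ ?_
    · exact AEStronglyMeasurable.inner
        (hu.aestronglyMeasurable.comp_quasiMeasurePreserving
          Measure.quasiMeasurePreserving_fst)
        (hv.aestronglyMeasurable.comp_quasiMeasurePreserving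
          Measure.quasiMeasurePreserving_snd)
    · exact Filter.Eventually.of_forall fun p => norm_inner_le_norm _ _
  have hHint : Integrable (fun p : ℝ × ℝ => H p.1 p.2) (μab.prod μab) := by
    have : (fun p : ℝ × ℝ => H p.1 p.2)
        = Set.indicator {p : ℝ × ℝ | p.1 < p.2}
            (fun p : ℝ × ℝ => (inner ℝ (u' p.1) (v' p.2) : ℝ)) := by
      ext p
      by_cases h : p.1 < p.2 <;> simp [hH, h, Set.indicator_apply]
    rw [this]
    exact hK.indicator (measurableSet_lt measurable_fst measurable_snd)
  -- step 1: pull the inner ℝ product inside the integral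
  have step1 : (inner ℝ (U b) (V b) : ℝ) = ∫ t in Set.Ioc a b, (inner ℝ (u' t) (V b) : ℝ) :=
    (setInt_inner_left hu (V b)).symm
  -- step 2: split the inner ℝ integral
  have step2 : ∀ t ∈ Set.Ioc a b,
      (inner ℝ (u' t) (V b) : ℝ)
        = (inner ℝ (u' t) (V t) : ℝ) + ∫ r in Set.Ioc a b, H t r := by
    intro t ht
    have hsplit : V b = V t + ∫ r in Set.Ioc t b, v' r := by
      rw [hV]
      rw [← MeasureTheory.setIntegral_union (Set.Ioc_disjoint_Ioc_of_le le_rfl)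
        measurableSet_Ioc (hv.mono_set (Set.Ioc_subset_Ioc_right ht.2))
        (hv.mono_set (Set.Ioc_subset_Ioc_left ht.1.le)),
        Set.Ioc_union_Ioc_eq_Ioc ht.1.le ht.2]
    rw [hsplit, inner_add_right]
    congr 1
    rw [← setInt_inner_right (hv.mono_set (Set.Ioc_subset_Ioc_left ht.1.le)) (u' t)]
    have heq : ∀ r ∈ Set.Ioc a b,
        H t r = (Set.Ioc t b).indicator (fun r => (inner ℝ (u' t) (v' r) : ℝ)) r := by
      intro r hr
      by_cases h : t < r
      · simp [hH, h, Set.indicator_apply, Set.mem_Ioc, hr.2]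
      · simp [hH, h, Set.indicator_apply, Set.mem_Ioc]
    rw [setIntegral_congr_fun measurableSet_Ioc heq,
      MeasureTheory.setIntegral_indicator measurableSet_Ioc,
      Set.inter_eq_self_of_subset_right (Set.Ioc_subset_Ioc_left ht.1.le)]
  -- step 4: the swapped inner ℝ integral
  have step4 : ∀ r ∈ Set.Ioc a b,
      (∫ t in Set.Ioc a b, H t r) = (inner ℝ (U r) (v' r) : ℝ) := by
    intro r hr
    have heq : ∀ t ∈ Set.Ioc a b,
        H t r = (Set.Iio r).indicator (fun t => (inner ℝ (u' t) (v' r) : ℝ)) t := by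
      intro t _
      by_cases h : t < r
      · simp [hH, h, Set.indicator_apply, Set.mem_Iio]
      · simp [hH, h, Set.indicator_apply, Set.mem_Iio]
    rw [setIntegral_congr_fun measurableSet_Ioc heq,
      MeasureTheory.setIntegral_indicator measurableSet_Iio]
    have hset : Set.Ioc a b ∩ Set.Iio r = Set.Ioo a r := by
      ext x
      simp only [Set.mem_inter_iff, Set.mem_Ioc, Set.mem_Iio, Set.mem_Ioo]
      exact ⟨fun h => ⟨h.1.1, h.2⟩, fun h => ⟨⟨h.1, (le_of_lt h.2).trans hr.2⟩, h.2⟩⟩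
    rw [hset, ← MeasureTheory.integral_Ioc_eq_integral_Ioo]
    exact setInt_inner_left (hu.mono_set (Set.Ioc_subset_Ioc_right hr.2)) (v' r)
  -- assemble
  have hIoc1 : IntegrableOn (fun t => (inner ℝ (u' t) (V t) : ℝ)) (Set.Ioc a b) :=
    integrableOn_inner_primitive hu hv
  have hIoc2 : IntegrableOn (fun t => ∫ r in Set.Ioc a b, H t r) (Set.Ioc a b) := by
    have := hHint.integral_prod_left
    exact this
  calc (inner ℝ (U b) (V b) : ℝ)
      = ∫ t in Set.Ioc a b, (inner ℝ (u' t) (V b) : ℝ) := step1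
    _ = ∫ t in Set.Ioc a b, ((inner ℝ (u' t) (V t) : ℝ) + ∫ r in Set.Ioc a b, H t r) :=
        setIntegral_congr_fun measurableSet_Ioc step2
    _ = (∫ t in Set.Ioc a b, (inner ℝ (u' t) (V t) : ℝ))
          + ∫ t in Set.Ioc a b, ∫ r in Set.Ioc a b, H t r := integral_add hIoc1 hIoc2
    _ = (∫ t in Set.Ioc a b, (inner ℝ (u' t) (V t) : ℝ))
          + ∫ r in Set.Ioc a b, ∫ t in Set.Ioc a b, H t r := by
        rw [MeasureTheory.integral_integral_swap hHint]
    _ = (∫ t in Set.Ioc a b, (inner ℝ (u' t) (V t) : ℝ))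
          + ∫ r in Set.Ioc a b, (inner ℝ (U r) (v' r) : ℝ) := by
        rw [setIntegral_congr_fun measurableSet_Ioc step4]
    _ = ∫ t in Set.Ioc a b, ((inner ℝ (u' t) (V t) : ℝ) + (inner ℝ (U t) (v' t) : ℝ)) := by
        rw [← integral_add hIoc1]
        exact integrableOn_inner_primitive' hu hv

/-- Product-rule FTC for primitives, inner-product version. -/
private lemma inner_ftc {a b : ℝ} (hab : a ≤ b) {u v u' v' : ℝ → E}
    (hu' : IntegrableOn u' (Set.Ioc a b)) (hv' : IntegrableOn v' (Set.Ioc a b))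
    (hu : ∀ t ∈ Set.Icc a b, u t = u a + ∫ s in Set.Ioc a t, u' s)
    (hv : ∀ t ∈ Set.Icc a b, v t = v a + ∫ s in Set.Ioc a t, v' s) :
    (inner ℝ (u b) (v b) : ℝ) = (inner ℝ (u a) (v a) : ℝ)
      + ∫ t in Set.Ioc a b, ((inner ℝ (u' t) (v t) : ℝ) + (inner ℝ (u t) (v' t) : ℝ)) := by
  set U : ℝ → E := fun r => ∫ s in Set.Ioc a r, u' s with hU
  set V : ℝ → E := fun r => ∫ s in Set.Ioc a r, v' s with hV
  have h1 : IntegrableOn (fun t => (inner ℝ (u' t) (v a) : ℝ)) (Set.Ioc a b) :=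
    integrableOn_inner_const (v a) hu'
  have h2 : IntegrableOn (fun t => (inner ℝ (u a) (v' t) : ℝ)) (Set.Ioc a b) := by
    have := integrableOn_inner_const (u a) hv'
    refine this.congr_fun (fun t _ => real_inner_comm _ _) measurableSet_Ioc
  have h3 : IntegrableOn (fun t => (inner ℝ (u' t) (V t) : ℝ)) (Set.Ioc a b) :=
    integrableOn_inner_primitive hu' hv'
  have h4 : IntegrableOn (fun t => (inner ℝ (U t) (v' t) : ℝ)) (Set.Ioc a b) :=
    integrableOn_inner_primitive' hu' hv'
  have hcongr : ∀ t ∈ Set.Ioc a b,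
      (inner ℝ (u' t) (v t) : ℝ) + (inner ℝ (u t) (v' t) : ℝ)
        = ((inner ℝ (u' t) (v a) : ℝ) + (inner ℝ (u a) (v' t) : ℝ))
          + ((inner ℝ (u' t) (V t) : ℝ) + (inner ℝ (U t) (v' t) : ℝ)) := by
    intro t ht
    rw [hu t (Set.Ioc_subset_Icc_self ht), hv t (Set.Ioc_subset_Icc_self ht),
      inner_add_right, inner_add_left]
    ring
  have h12 : IntegrableOn
      (fun t => (inner ℝ (u' t) (v a) : ℝ) + (inner ℝ (u a) (v' t) : ℝ)) (Set.Ioc a b) := h1.add h2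
  have h34 : IntegrableOn
      (fun t => (inner ℝ (u' t) (V t) : ℝ) + (inner ℝ (U t) (v' t) : ℝ)) (Set.Ioc a b) := h3.add h4
  rw [setIntegral_congr_fun measurableSet_Ioc hcongr,
    integral_add h12 h34, integral_add h1 h2,
    setInt_inner_left hu' (v a), setInt_inner_right hv' (u a),
    ← inner_integral_eq hab hu' hv',
    hu b ⟨hab, le_refl b⟩, hv b ⟨hab, le_refl b⟩, inner_add_left, inner_add_right,
    inner_add_right]
  ring_nf

end Helpers

/-- Incremental exponential stability of monotone perturbed sweeping
processes (Step 1 of Theorem 2.3). -/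
theorem stmt16 (n : ℕ) (α t₀ : ℝ) (hα : 0 < α)
    (f : ℝ → EuclideanSpace ℝ (Fin n) → EuclideanSpace ℝ (Fin n))
    (C : ℝ → Set (EuclideanSpace ℝ (Fin n)))
    (hCconv : ∀ t, Convex ℝ (C t))
    (hmono : ∀ (t : ℝ) (y₁ y₂ : EuclideanSpace ℝ (Fin n)),
      α * ‖y₁ - y₂‖ ^ 2 ≤ inner ℝ (f t y₁ - f t y₂) (y₁ - y₂))
    (x₁ x₂ x₁' x₂' : ℝ → EuclideanSpace ℝ (Fin n))
    (hmem₁ : ∀ t, t₀ ≤ t → x₁ t ∈ C t) (hmem₂ : ∀ t, t₀ ≤ t → x₂ t ∈ C t)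
    (hint₁ : ∀ t, t₀ ≤ t → IntervalIntegrable x₁' volume t₀ t)
    (hint₂ : ∀ t, t₀ ≤ t → IntervalIntegrable x₂' volume t₀ t)
    (hderiv₁ : ∀ᵐ t, t₀ ≤ t → HasDerivAt x₁ (x₁' t) t)
    (hderiv₂ : ∀ᵐ t, t₀ ≤ t → HasDerivAt x₂ (x₂' t) t)
    (hftc₁ : ∀ t, t₀ ≤ t → x₁ t = x₁ t₀ + ∫ s in t₀..t, x₁' s)
    (hftc₂ : ∀ t, t₀ ≤ t → x₂ t = x₂ t₀ + ∫ s in t₀..t, x₂' s)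
    (hincl₁ : ∀ᵐ t, t₀ ≤ t → ∀ c ∈ C t,
      (inner ℝ (-x₁' t - f t (x₁ t)) (c - x₁ t) : ℝ) ≤ 0)
    (hincl₂ : ∀ᵐ t, t₀ ≤ t → ∀ c ∈ C t,
      (inner ℝ (-x₂' t - f t (x₂ t)) (c - x₂ t) : ℝ) ≤ 0) :
    ∀ t, t₀ ≤ t → ‖x₁ t - x₂ t‖ ^ 2 ≤
      Real.exp (-2 * α * (t - t₀)) * ‖x₁ t₀ - x₂ t₀‖ ^ 2 := by
  intro t ht
  set y : ℝ → EuclideanSpace ℝ (Fin n) := fun s => x₁ s - x₂ s with hy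
  set y' : ℝ → EuclideanSpace ℝ (Fin n) := fun s => x₁' s - x₂' s with hy'
  have hy'int : ∀ s, t₀ ≤ s → IntegrableOn y' (Set.Ioc t₀ s) := fun s hs =>
    ((hint₁ s hs).sub (hint₂ s hs)).1
  have hyftc : ∀ s ∈ Set.Icc t₀ t, y s = y t₀ + ∫ r in Set.Ioc t₀ s, y' r := by
    intro s hs
    rw [← intervalIntegral.integral_of_le hs.1, hy', hy]
    simp only
    rw [intervalIntegral.integral_sub (hint₁ s hs.1) (hint₂ s hs.1),
      hftc₁ s hs.1, hftc₂ s hs.1]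
    abel
  set g : ℝ → ℝ := fun s => (inner ℝ (y s) (y s) : ℝ) with hg
  set g' : ℝ → ℝ := fun s => 2 * (inner ℝ (y' s) (y s) : ℝ) with hg'
  -- FTC identity for g on [t₀, s]
  have hgftc : ∀ s ∈ Set.Icc t₀ t, g s = g t₀ + ∫ r in Set.Ioc t₀ s, g' r := by
    intro s hs
    have h := inner_ftc hs.1 (hy'int s hs.1) (hy'int s hs.1)
      (fun r hr => hyftc r ⟨hr.1, hr.2.trans hs.2⟩)
      (fun r hr => hyftc r ⟨hr.1, hr.2.trans hs.2⟩)
    rw [hg]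
    simp only
    rw [h]
    congr 1
    refine setIntegral_congr_fun measurableSet_Ioc fun r _ => ?_
    rw [hg']
    simp only
    rw [real_inner_comm (y r) (y' r)]
    ring
  -- continuity and boundedness of y on [t₀, t]
  have hycont : ContinuousOn y (Set.Icc t₀ t) := by
    refine ContinuousOn.congr
      ((continuousOn_const (c := y t₀)).add (contOn_primitive (hy'int t ht))) ?_
    exact fun s hs => hyftc s hs
  obtain ⟨My, hMy⟩ := isCompact_Icc.exists_bound_of_continuousOn hycont
  have hg'int : IntegrableOn g' (Set.Ioc t₀ t) := by
    refine Integrable.mono' (((hy'int t ht).norm.mul_const My).const_mul 2) ?_ ?_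
    · exact (AEStronglyMeasurable.inner (hy'int t ht).aestronglyMeasurable
        ((hycont.mono Set.Ioc_subset_Icc_self).aestronglyMeasurable
          measurableSet_Ioc)).const_mul 2
    · refine (ae_restrict_iff' measurableSet_Ioc).2
        (Filter.Eventually.of_forall fun s hs => ?_)
      rw [hg']
      simp only [norm_mul, Real.norm_ofNat]
      refine mul_le_mul_of_nonneg_left ?_ (by norm_num)
      calc ‖(inner ℝ (y' s) (y s) : ℝ)‖ ≤ ‖y' s‖ * ‖y s‖ := norm_inner_le_norm _ _
        _ ≤ ‖y' s‖ * My :=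
            mul_le_mul_of_nonneg_left (hMy s (Set.Ioc_subset_Icc_self hs)) (norm_nonneg _)
  -- exponential function FTC
  have hEderiv : ∀ s : ℝ, HasDerivAt (fun r => Real.exp (2 * α * r))
      (2 * α * Real.exp (2 * α * s)) s := by
    intro s
    have h := ((hasDerivAt_id s).const_mul (2 * α)).exp
    simpa [mul_comm] using h
  have hEcont : Continuous fun s : ℝ => 2 * α * Real.exp (2 * α * s) := by fun_prop
  have hEftc : ∀ s ∈ Set.Icc t₀ t,
      Real.exp (2 * α * s) = Real.exp (2 * α * t₀)
        + ∫ r in Set.Ioc t₀ s, 2 * α * Real.exp (2 * α * r) := by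
    intro s hs
    rw [← intervalIntegral.integral_of_le hs.1,
      intervalIntegral.integral_eq_sub_of_hasDerivAt (fun r _ => hEderiv r)
        ((hEcont.intervalIntegrable t₀ s))]
    ring
  -- apply the product-rule FTC with E = ℝ
  have hEint : IntegrableOn (fun s => 2 * α * Real.exp (2 * α * s)) (Set.Ioc t₀ t) :=
    hEcont.integrableOn_Ioc
  have key := inner_ftc (E := ℝ) ht hEint hg'int hEftc hgftc
  have hinner_mul : ∀ x z : ℝ, (inner ℝ x z : ℝ) = x * z := fun x z => by simp [RCLike.inner_apply, mul_comm]
  simp only [hinner_mul] at key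
  -- the integrand is a.e. nonpositive
  have hae : ∀ᵐ s ∂(volume.restrict (Set.Ioc t₀ t)),
      2 * α * Real.exp (2 * α * s) * g s + Real.exp (2 * α * s) * g' s ≤ 0 := by
    refine (ae_restrict_iff' measurableSet_Ioc).2 ?_
    filter_upwards [hincl₁, hincl₂] with s h1 h2 hs
    have hst : t₀ ≤ s := hs.1.le
    have hA := h1 hst (x₂ s) (hmem₂ s hst)
    have hB := h2 hst (x₁ s) (hmem₁ s hst)
    -- from hA: ⟪x₁' + f x₁, y⟫ ≤ 0
    have e1 : (inner ℝ (x₁' s + f s (x₁ s)) (y s) : ℝ) ≤ 0 := by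
      have hx : x₂ s - x₁ s = -(y s) := by rw [hy]; simp only; abel
      rw [hx, inner_neg_right, neg_nonpos] at hA
      have hx2 : -x₁' s - f s (x₁ s) = -(x₁' s + f s (x₁ s)) := by abel
      rw [hx2, inner_neg_left] at hA
      linarith
    have e2 : (0 : ℝ) ≤ (inner ℝ (x₂' s + f s (x₂ s)) (y s) : ℝ) := by
      have hx2 : -x₂' s - f s (x₂ s) = -(x₂' s + f s (x₂ s)) := by abel
      rw [hx2, inner_neg_left] at hB
      have : (inner ℝ (-(x₂' s + f s (x₂ s))) (x₁ s - x₂ s) : ℝ)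
          = -(inner ℝ (x₂' s + f s (x₂ s)) (y s) : ℝ) := by
        rw [inner_neg_left, hy]
      linarith [hB]
    have expand : (inner ℝ (x₁' s + f s (x₁ s)) (y s) : ℝ)
        - (inner ℝ (x₂' s + f s (x₂ s)) (y s) : ℝ)
        = (inner ℝ (y' s) (y s) : ℝ) + (inner ℝ (f s (x₁ s) - f s (x₂ s)) (y s) : ℝ) := by
      rw [← inner_sub_left, ← inner_add_left]
      congr 1
      rw [hy']
      simp only
      abel
    have hm := hmono s (x₁ s) (x₂ s)
    have hgy : g s = ‖y s‖ ^ 2 := real_inner_self_eq_norm_sq (y s)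
    have hyy : (inner ℝ (y' s) (y s) : ℝ) ≤ -α * g s := by
      have : (inner ℝ (f s (x₁ s) - f s (x₂ s)) (y s) : ℝ)
          = (inner ℝ (f s (x₁ s) - f s (x₂ s)) (x₁ s - x₂ s) : ℝ) := by rw [hy]
      rw [hgy]
      nlinarith [hm]
    have hexp : (0 : ℝ) < Real.exp (2 * α * s) := Real.exp_pos _
    rw [hg']
    simp only
    nlinarith [hexp, hyy]
  have hI : (∫ s in Set.Ioc t₀ t,
      (2 * α * Real.exp (2 * α * s) * g s + Real.exp (2 * α * s) * g' s)) ≤ 0 :=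
    integral_nonpos_of_ae hae
  have hfin : Real.exp (2 * α * t) * g t ≤ Real.exp (2 * α * t₀) * g t₀ := by
    rw [key] at *
    linarith [hI]
  -- conclude
  have hgt : g t = ‖x₁ t - x₂ t‖ ^ 2 := real_inner_self_eq_norm_sq (y t)
  have hgt0 : g t₀ = ‖x₁ t₀ - x₂ t₀‖ ^ 2 := real_inner_self_eq_norm_sq (y t₀)
  have hexp : Real.exp (-2 * α * (t - t₀))
      = Real.exp (2 * α * t₀) / Real.exp (2 * α * t) := by
    rw [← Real.exp_sub]; ring_nf
  rw [← hgt, ← hgt0, hexp, div_mul_eq_mul_div, le_div_iff₀ (Real.exp_pos _)]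
  calc g t * Real.exp (2 * α * t) = Real.exp (2 * α * t) * g t := by ring
    _ ≤ Real.exp (2 * α * t₀) * g t₀ := hfin
end
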